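/- arXiv:1710.10425 — 3 statements merged into one kernel-verified Lean document; each statement's English description precedes it below -/
import Mathlib

section
/- Let σ be a real number and Φ_m = Γ(m+σ+1)/Γ(m-σ) for integers m. Then Φ_m > 0 for all integers m if and only if -1 < σ < 0. -/
lemma gamma_neg_of_mem {x : ℝ} (h1 : -1 < x) (h2 : x < 0) : Real.Gamma x < 0 := by
  have hx : x ≠ 0 := ne_of_lt h2
  have heq := Real.Gamma_add_one hx
  have hp : 0 < Real.Gamma (x + 1) := Real.Gamma_pos_of_pos (by linarith)
  nlinarith

lemma neg_case (σ : ℝ) (h1 : -1 < σ) (h2 : σ < 0) :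
    ∀ k : ℕ, 0 < Real.Gamma (-(k : ℝ) + σ + 1) / Real.Gamma (-(k : ℝ) - σ) := by
  intro k
  induction k with
  | zero =>
      simp only [Nat.cast_zero, neg_zero, zero_add, zero_sub]
      exact div_pos (Real.Gamma_pos_of_pos (by linarith)) (Real.Gamma_pos_of_pos (by linarith))
  | succ n ih =>
      have hn : (0:ℝ) ≤ (n : ℝ) := Nat.cast_nonneg n
      have haneg : (-(n : ℝ) + σ) < 0 := by linarith
      have hbneg : (-(n : ℝ) - 1 - σ) < 0 := by linarith
      have hGa : Real.Gamma (-(n : ℝ) + σ + 1)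
          = (-(n : ℝ) + σ) * Real.Gamma (-(n : ℝ) + σ) := Real.Gamma_add_one haneg.ne
      have hGb : Real.Gamma (-(n : ℝ) - σ)
          = (-(n : ℝ) - 1 - σ) * Real.Gamma (-(n : ℝ) - 1 - σ) := by
        have := Real.Gamma_add_one hbneg.ne
        rw [show (-(n : ℝ) - 1 - σ + 1) = -(n : ℝ) - σ by ring] at this
        exact this
      have key : 0 < ((-(n : ℝ) + σ) * Real.Gamma (-(n : ℝ) + σ)) /
          ((-(n : ℝ) - 1 - σ) * Real.Gamma (-(n : ℝ) - 1 - σ)) := by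
        rw [← hGa, ← hGb]; exact ih
      rw [mul_div_mul_comm] at key
      have hq : 0 < (-(n : ℝ) + σ) / (-(n : ℝ) - 1 - σ) := div_pos_of_neg_of_neg haneg hbneg
      have hr : 0 < Real.Gamma (-(n : ℝ) + σ) / Real.Gamma (-(n : ℝ) - 1 - σ) := by
        by_contra hc
        push_neg at hc
        nlinarith
      have e1 : -((n : ℝ) + 1) + σ + 1 = -(n : ℝ) + σ := by ring
      have e2 : -((n : ℝ) + 1) - σ = -(n : ℝ) - 1 - σ := by ring
      push_cast
      rw [e1, e2]
      exact hr

theorem stmt2 (σ : ℝ) :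
    (∀ m : ℤ, Real.Gamma ((m : ℝ) + σ + 1) / Real.Gamma ((m : ℝ) - σ) > 0) ↔
      (-1 < σ ∧ σ < 0) := by
  constructor
  · intro h
    have hni : ∀ n : ℤ, σ ≠ (n : ℝ) := by
      intro n hσ
      have hn := h n
      rw [hσ, sub_self, Real.Gamma_zero, div_zero] at hn
      exact lt_irrefl 0 hn
    have hfl : ((⌊σ⌋ : ℤ) : ℝ) < σ :=
      lt_of_le_of_ne (Int.floor_le σ) fun e => hni ⌊σ⌋ e.symm
    have hfu : σ < (⌊σ⌋ : ℝ) + 1 := Int.lt_floor_add_one σ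
    constructor
    · by_contra hc
      push_neg at hc
      have hσlt : σ < -1 := lt_of_le_of_ne hc (by simpa using hni (-1))
      have hz : ⌊σ⌋ < -1 := by exact_mod_cast lt_of_le_of_lt (Int.floor_le σ) hσlt
      have hfloor : (⌊σ⌋ : ℝ) ≤ -2 := by exact_mod_cast (by omega : ⌊σ⌋ ≤ -2)
      have hm := h (-⌊σ⌋ - 2)
      push_cast at hm
      have hnum : Real.Gamma (-(⌊σ⌋ : ℝ) - 2 + σ + 1) < 0 := by
        apply gamma_neg_of_mem <;> linarith
      have hden : 0 < Real.Gamma (-(⌊σ⌋ : ℝ) - 2 - σ) :=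
        Real.Gamma_pos_of_pos (by linarith)
      have : Real.Gamma (-(⌊σ⌋ : ℝ) - 2 + σ + 1) / Real.Gamma (-(⌊σ⌋ : ℝ) - 2 - σ) < 0 :=
        div_neg_of_neg_of_pos hnum hden
      linarith
    · by_contra hc
      push_neg at hc
      have hfn : (0:ℝ) ≤ (⌊σ⌋ : ℝ) := by
        exact_mod_cast Int.floor_nonneg.mpr hc
      have hm := h ⌊σ⌋
      have hnum : 0 < Real.Gamma ((⌊σ⌋ : ℝ) + σ + 1) :=
        Real.Gamma_pos_of_pos (by linarith)
      have hden : Real.Gamma ((⌊σ⌋ : ℝ) - σ) < 0 := by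
        apply gamma_neg_of_mem <;> linarith
      have : Real.Gamma ((⌊σ⌋ : ℝ) + σ + 1) / Real.Gamma ((⌊σ⌋ : ℝ) - σ) < 0 :=
        div_neg_of_pos_of_neg hnum hden
      linarith
  · rintro ⟨h1, h2⟩ m
    rcases le_or_gt 0 m with hm | hm
    · have hm' : (0:ℝ) ≤ (m : ℝ) := by exact_mod_cast hm
      exact div_pos (Real.Gamma_pos_of_pos (by linarith)) (Real.Gamma_pos_of_pos (by linarith))
    · obtain ⟨k, rfl⟩ : ∃ k : ℕ, m = -(k : ℤ) := ⟨(-m).toNat, by omega⟩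
      have := neg_case σ h1 h2 k
      push_cast
      exact this
end

section
/- For complex σ and real α, the zonal function Z_σ(α) = (1/2π)∫₀^{2π} (cosh α - sinh α cos φ)^σ dφ satisfies the symmetry Z_{-1-σ}(α) = Z_σ(α). -/
open Real Set

private lemma zs5_base_pos (α φ : ℝ) : 0 < Real.cosh α - Real.sinh α * Real.cos φ := by
  have h1 : Real.cosh α ^ 2 - Real.sinh α ^ 2 = 1 := Real.cosh_sq_sub_sinh_sq α
  have h2 : |Real.cos φ| ≤ 1 := Real.abs_cos_le_one φ
  have h3 : 0 < Real.cosh α := Real.cosh_pos α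
  have h4 : Real.sinh α * Real.cos φ ≤ |Real.sinh α| := by
    calc Real.sinh α * Real.cos φ ≤ |Real.sinh α * Real.cos φ| := le_abs_self _
    _ = |Real.sinh α| * |Real.cos φ| := abs_mul _ _
    _ ≤ |Real.sinh α| * 1 := by nlinarith [abs_nonneg (Real.sinh α)]
    _ = |Real.sinh α| := mul_one _
  nlinarith [sq_abs (Real.sinh α), abs_nonneg (Real.sinh α)]

private lemma zs5_cpow_pos_eq {x : ℝ} (hx : 0 < x) (τ : ℂ) :
    (x:ℂ) ^ τ = Complex.exp (τ * ((Real.log x : ℝ) : ℂ)) := by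
  rw [Complex.cpow_def_of_ne_zero (by exact_mod_cast hx.ne'), Complex.ofReal_log hx.le, mul_comm]

private lemma zs5_cont (α : ℝ) (τ : ℂ) :
    Continuous fun φ : ℝ => ((Real.cosh α - Real.sinh α * Real.cos φ : ℝ) : ℂ) ^ τ := by
  have he : (fun φ : ℝ => ((Real.cosh α - Real.sinh α * Real.cos φ : ℝ) : ℂ) ^ τ)
      = fun φ => Complex.exp (τ * ((Real.log (Real.cosh α - Real.sinh α * Real.cos φ) : ℝ) : ℂ)) :=
    funext fun φ => zs5_cpow_pos_eq (zs5_base_pos α φ) τ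
  rw [he]
  have hc : Continuous fun φ : ℝ => Real.cosh α - Real.sinh α * Real.cos φ := by fun_prop
  exact Complex.continuous_exp.comp <| continuous_const.mul <|
    Complex.continuous_ofReal.comp <| hc.log fun φ => (zs5_base_pos α φ).ne'

private lemma zs5_refl_cos (F : ℝ → ℂ) :
    (∫ x in (0:ℝ)..Real.pi, F (-Real.cos x)) = ∫ x in (0:ℝ)..Real.pi, F (Real.cos x) := by
  have h := intervalIntegral.integral_comp_sub_left (a := (0:ℝ)) (b := Real.pi)
      (fun x => F (Real.cos x)) Real.pi
  simp only [Real.cos_pi_sub, sub_self, sub_zero] at h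
  exact h

private lemma zs5_period_cos (F : ℝ → ℂ) :
    (∫ x in Real.pi..(2*Real.pi), F (Real.cos x)) = ∫ x in (0:ℝ)..Real.pi, F (Real.cos x) := by
  have h := intervalIntegral.integral_comp_sub_left (a := (0:ℝ)) (b := Real.pi)
      (fun x => F (Real.cos x)) (2*Real.pi)
  have e : ∀ x : ℝ, Real.cos (2*Real.pi - x) = Real.cos x := by
    intro x; rw [Real.cos_sub]; simp [Real.cos_two_pi, Real.sin_two_pi]
  simp only [e] at h
  rw [show (2*Real.pi - Real.pi) = Real.pi by ring, sub_zero] at h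
  exact h.symm

private lemma zs5_alg_sq (c s x S : ℝ) (hcs : c^2 - s^2 = 1) (hS : S^2 + x^2 = 1)
    (hs : s ≠ 0) (hv0 : c + s*x ≠ 0) :
    1 - ((c*(c + s*x)-1)/(s*(c + s*x)))^2 = (S/(c + s*x))^2 := by
  have key2 : (s*(c+s*x))^2 - (c*(c+s*x)-1)^2 = (s*S)^2 := by
    linear_combination (-(s^2)) * hS +
      (s^2*(1 - x^2) - 2*s^2 - 2*c*s*x - (c^2 - s^2 - 1)) * hcs
  have hB : s*(c+s*x) ≠ 0 := mul_ne_zero hs hv0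
  have e : ((s*(c+s*x))^2 - (c*(c+s*x)-1)^2)/(s*(c+s*x))^2
      = 1 - ((c*(c + s*x)-1)/(s*(c + s*x)))^2 := by
    rw [sub_div, div_self (pow_ne_zero _ hB), div_pow]
  rw [← e, key2, mul_pow, mul_pow, mul_div_mul_left _ _ (pow_ne_zero _ hs), ← div_pow]

private lemma zs5_alg_cos (c s v : ℝ) (hs : s ≠ 0) (hv : v ≠ 0) :
    c - s*((c*v-1)/(s*v)) = v⁻¹ := by
  field_simp
  ring

private lemma zs5_alg_one (c s : ℝ) (hcs : c^2-s^2=1) (h0 : s*(c+s) ≠ 0) :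
    (c*(c+s)-1)/(s*(c+s)) = 1 := by
  rw [div_eq_one_iff_eq h0]; linear_combination hcs

private lemma zs5_alg_negone (c s : ℝ) (hcs : c^2-s^2=1) (h0 : s*(c-s) ≠ 0) :
    (c*(c-s)-1)/(s*(c-s)) = -1 := by
  rw [div_eq_iff h0]; linear_combination hcs

private lemma zs5_alg_deriv (c s S v : ℝ) (hs : s ≠ 0) (hS : S ≠ 0) (hv : v ≠ 0) :
    -(1/(S/v)) * ((c*(s*-S)*(s*v) - (c*v-1)*(s*(s*-S)))/(s*v)^2) = v⁻¹ := by
  field_simp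
  ring

private lemma zs5_cpow_smul_aux (v : ℝ) (hv : 0 < v) (σ : ℂ) :
    (v⁻¹ : ℝ) • (((v⁻¹ : ℝ) : ℂ)) ^ σ = ((v : ℝ) : ℂ) ^ (-1-σ) := by
  have hvne : ((v:ℝ):ℂ) ≠ 0 := Complex.ofReal_ne_zero.mpr hv.ne'
  have harg : ((v:ℝ):ℂ).arg ≠ Real.pi := by
    rw [Complex.arg_ofReal_of_nonneg hv.le]; exact fun h => Real.pi_ne_zero h.symm
  rw [Complex.real_smul, Complex.ofReal_inv, Complex.inv_cpow _ _ harg, ← Complex.cpow_neg,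
    show (-1-σ : ℂ) = -1 + -σ by ring, Complex.cpow_add _ _ hvne, Complex.cpow_neg_one]

private lemma zs5_key (σ : ℂ) (α : ℝ) (hα : 0 < α) :
    (∫ φ in (0:ℝ)..Real.pi, ((Real.cosh α - Real.sinh α * Real.cos φ : ℝ) : ℂ) ^ (-1-σ))
      = ∫ φ in (0:ℝ)..Real.pi, ((Real.cosh α - Real.sinh α * Real.cos φ : ℝ) : ℂ) ^ σ := by
  set c := Real.cosh α with hcdef
  set s := Real.sinh α with hsdef
  have hs : 0 < s := Real.sinh_pos_iff.mpr hα
  have hcs : c ^ 2 - s ^ 2 = 1 := Real.cosh_sq_sub_sinh_sq α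
  have hc : 0 < c := Real.cosh_pos α
  have hu_pos : ∀ φ : ℝ, 0 < c + s * Real.cos φ := by
    intro φ
    have := zs5_base_pos α (Real.pi - φ)
    rw [Real.cos_pi_sub] at this
    rw [← hcdef, ← hsdef] at this
    nlinarith [this]
  set u : ℝ → ℝ := fun φ => c + s * Real.cos φ with hudef
  set h : ℝ → ℝ := fun φ => (c * u φ - 1) / (s * u φ) with hhdef
  set ψ : ℝ → ℝ := fun φ => Real.arccos (h φ) with hψdef
  have hD : ∀ φ, s * u φ ≠ 0 := fun φ => mul_ne_zero hs.ne' (hu_pos φ).ne'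
  have hsq : ∀ φ, 1 - h φ ^ 2 = (Real.sin φ / u φ) ^ 2 := fun φ =>
    zs5_alg_sq c s (Real.cos φ) (Real.sin φ) hcs (Real.sin_sq_add_cos_sq φ) hs.ne' (hu_pos φ).ne'
  have hmem : ∀ φ, -1 ≤ h φ ∧ h φ ≤ 1 := by
    intro φ
    have h1 : h φ ^ 2 ≤ 1 := by nlinarith [hsq φ, sq_nonneg (Real.sin φ / u φ)]
    constructor <;> nlinarith [sq_nonneg (h φ - 1), sq_nonneg (h φ + 1)]
  have hcosψ : ∀ φ, c - s * Real.cos (ψ φ) = (u φ)⁻¹ := by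
    intro φ
    rw [hψdef]
    simp only
    rw [Real.cos_arccos (hmem φ).1 (hmem φ).2, hhdef]
    exact zs5_alg_cos c s (u φ) hs.ne' (hu_pos φ).ne'
  have hψ0 : ψ 0 = 0 := by
    have hu0 : u 0 = c + s := by simp [hudef]
    have hh0 : h 0 = 1 := by
      rw [hhdef]; simp only [hu0]
      exact zs5_alg_one c s hcs (hu0 ▸ hD 0)
    rw [hψdef]; simp only [hh0, Real.arccos_one]
  have hψπ : ψ Real.pi = Real.pi := by
    have huπ : u Real.pi = c - s := by simp [hudef]; ring
    have hhπ : h Real.pi = -1 := by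
      rw [hhdef]; simp only [huπ]
      exact zs5_alg_negone c s hcs (huπ ▸ hD Real.pi)
    rw [hψdef]; simp only [hhπ, Real.arccos_neg_one]
  have hu_cont : Continuous u := by rw [hudef]; fun_prop
  have hh_cont : Continuous h := by
    rw [hhdef]
    exact ((continuous_const.mul hu_cont).sub continuous_const).div
      (continuous_const.mul hu_cont) hD
  have hψ_cont : Continuous ψ := Real.continuous_arccos.comp hh_cont
  have hf'_cont : Continuous fun φ => (u φ)⁻¹ := hu_cont.inv₀ fun φ => (hu_pos φ).ne'
  have hderiv : ∀ φ ∈ Ioo (0:ℝ) Real.pi, HasDerivAt ψ ((u φ)⁻¹) φ := by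
    intro φ hφ
    have hsin : 0 < Real.sin φ := Real.sin_pos_of_pos_of_lt_pi hφ.1 hφ.2
    have hu' : HasDerivAt u (s * -Real.sin φ) φ :=
      ((Real.hasDerivAt_cos φ).const_mul s).const_add c
    have hN : HasDerivAt (fun φ => c * u φ - 1) (c * (s * -Real.sin φ)) φ :=
      (hu'.const_mul c).sub_const 1
    have hDd : HasDerivAt (fun φ => s * u φ) (s * (s * -Real.sin φ)) φ := hu'.const_mul s
    have hh' : HasDerivAt h
        ((c * (s * -Real.sin φ) * (s * u φ) - (c * u φ - 1) * (s * (s * -Real.sin φ)))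
          / (s * u φ) ^ 2) φ := by
      rw [hhdef]; exact hN.div hDd (hD φ)
    have hsqφ := hsq φ
    have hpos2 : (0:ℝ) < Real.sin φ / u φ := div_pos hsin (hu_pos φ)
    have hh2 : h φ ^ 2 < 1 := by nlinarith
    have hne1 : h φ ≠ -1 := by intro e; rw [e] at hh2; norm_num at hh2
    have hne2 : h φ ≠ 1 := by intro e; rw [e] at hh2; norm_num at hh2
    have harc := Real.hasDerivAt_arccos hne1 hne2
    have hcomp := harc.comp φ hh'
    have hval : -(1 / Real.sqrt (1 - h φ ^ 2)) *
        ((c * (s * -Real.sin φ) * (s * u φ) - (c * u φ - 1) * (s * (s * -Real.sin φ)))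
          / (s * u φ) ^ 2) = (u φ)⁻¹ := by
      rw [hsqφ, Real.sqrt_sq hpos2.le]
      exact zs5_alg_deriv c s (Real.sin φ) (u φ) hs.ne' hsin.ne' (hu_pos φ).ne'
    rw [hval] at hcomp
    have : ψ = Real.arccos ∘ h := rfl
    rw [this]
    exact hcomp
  have hsub := intervalIntegral.integral_comp_smul_deriv''
      (f := ψ) (f' := fun φ => (u φ)⁻¹)
      (g := fun y => ((c - s * Real.cos y : ℝ) : ℂ) ^ σ)
      (a := 0) (b := Real.pi)
      hψ_cont.continuousOn
      (by
        rw [min_eq_left Real.pi_pos.le, max_eq_right Real.pi_pos.le]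
        exact fun x hx => (hderiv x hx).hasDerivWithinAt)
      hf'_cont.continuousOn
      ((zs5_cont α σ).continuousOn)
  rw [hψ0, hψπ] at hsub
  have hpt : ∀ φ ∈ uIcc (0:ℝ) Real.pi,
      (u φ)⁻¹ • ((fun y => ((c - s * Real.cos y : ℝ) : ℂ) ^ σ) ∘ ψ) φ
        = ((c + s * Real.cos φ : ℝ) : ℂ) ^ (-1-σ) := by
    intro φ _
    have : ((fun y => ((c - s * Real.cos y : ℝ) : ℂ) ^ σ) ∘ ψ) φ
        = (((u φ)⁻¹ : ℝ) : ℂ) ^ σ := by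
      simp only [Function.comp_apply]
      rw [hcosψ φ]
    rw [this, zs5_cpow_smul_aux (u φ) (hu_pos φ) σ]
  rw [intervalIntegral.integral_congr hpt] at hsub
  have hrefl := zs5_refl_cos (fun x => ((c + s * x : ℝ) : ℂ) ^ (-1-σ))
  have : (fun x => ((c + s * (-Real.cos x) : ℝ) : ℂ) ^ (-1-σ))
      = fun x => ((c - s * Real.cos x : ℝ) : ℂ) ^ (-1-σ) := by
    funext x
    have e : c + s * (-Real.cos x) = c - s * Real.cos x := by ring
    rw [e]
  rw [this] at hrefl
  rw [hrefl]
  exact hsub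

theorem stmt5 (σ : ℂ) (α : ℝ) :
    (1 / (2 * (Real.pi : ℂ))) *
        ∫ φ in (0:ℝ)..(2 * Real.pi),
          ((Real.cosh α - Real.sinh α * Real.cos φ : ℝ) : ℂ) ^ (-1 - σ) =
      (1 / (2 * (Real.pi : ℂ))) *
        ∫ φ in (0:ℝ)..(2 * Real.pi),
          ((Real.cosh α - Real.sinh α * Real.cos φ : ℝ) : ℂ) ^ σ := by
  congr 1
  -- reduce to [0, π]
  have hhalf : ∀ τ : ℂ,
      (∫ φ in (0:ℝ)..(2*Real.pi), ((Real.cosh α - Real.sinh α * Real.cos φ : ℝ) : ℂ) ^ τ)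
        = 2 * ∫ φ in (0:ℝ)..Real.pi,
            ((Real.cosh α - Real.sinh α * Real.cos φ : ℝ) : ℂ) ^ τ := by
    intro τ
    have h1 : IntervalIntegrable
        (fun φ : ℝ => ((Real.cosh α - Real.sinh α * Real.cos φ : ℝ) : ℂ) ^ τ)
        MeasureTheory.volume 0 Real.pi := (zs5_cont α τ).intervalIntegrable _ _
    have h2 : IntervalIntegrable
        (fun φ : ℝ => ((Real.cosh α - Real.sinh α * Real.cos φ : ℝ) : ℂ) ^ τ)
        MeasureTheory.volume Real.pi (2*Real.pi) := (zs5_cont α τ).intervalIntegrable _ _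
    rw [← intervalIntegral.integral_add_adjacent_intervals h1 h2]
    have hp := zs5_period_cos (fun x => ((Real.cosh α - Real.sinh α * x : ℝ) : ℂ) ^ τ)
    rw [hp]
    ring
  rw [hhalf, hhalf]
  -- reduce sign of α
  have hmain : ∀ β : ℝ, 0 ≤ β →
      (∫ φ in (0:ℝ)..Real.pi, ((Real.cosh β - Real.sinh β * Real.cos φ : ℝ) : ℂ) ^ (-1-σ))
        = ∫ φ in (0:ℝ)..Real.pi, ((Real.cosh β - Real.sinh β * Real.cos φ : ℝ) : ℂ) ^ σ := by
    intro β hβ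
    rcases eq_or_lt_of_le hβ with hz | hp
    · simp [← hz, Real.cosh_zero, Real.sinh_zero]
    · exact zs5_key σ β hp
  have hflip : ∀ τ : ℂ,
      (∫ φ in (0:ℝ)..Real.pi, ((Real.cosh (-α) - Real.sinh (-α) * Real.cos φ : ℝ) : ℂ) ^ τ)
        = ∫ φ in (0:ℝ)..Real.pi, ((Real.cosh α - Real.sinh α * Real.cos φ : ℝ) : ℂ) ^ τ := by
    intro τ
    have hr := zs5_refl_cos (fun x => ((Real.cosh α - Real.sinh α * x : ℝ) : ℂ) ^ τ)
    have e : (fun x => ((Real.cosh α - Real.sinh α * (-Real.cos x) : ℝ) : ℂ) ^ τ)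
        = fun x => ((Real.cosh (-α) - Real.sinh (-α) * Real.cos x : ℝ) : ℂ) ^ τ := by
      funext x
      have e2 : Real.cosh α - Real.sinh α * (-Real.cos x)
          = Real.cosh (-α) - Real.sinh (-α) * Real.cos x := by
        rw [Real.cosh_neg, Real.sinh_neg]; ring
      rw [e2]
    rw [e] at hr
    exact hr
  rcases le_or_gt 0 α with hpos | hneg
  · rw [hmain α hpos]
  · rw [← hflip (-1-σ), ← hflip σ, hmain (-α) (by linarith)]
end

section
/- For complex σ, real α with |tanh α| < 1, and nonnegative integer m, the associated spherical function P_{σ,m}(α) = (1/2π)∫₀^{2π}(cosh α - sinh α cos φ)^σ e^{imφ} dφ equals ((-σ)_m / (2^m m!)) (cosh α)^σ (tanh α)^m · ₂F₁((m-σ)/2, (m-σ+1)/2; m+1; tanh²α). -/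
set_option linter.unusedTactic false

open Complex MeasureTheory intervalIntegral Metric

/-- Rising Pochhammer symbol `(x)_n`. -/
noncomputable def poch (x : ℂ) (n : ℕ) : ℂ := (ascPochhammer ℂ n).eval x

/-- Gauss hypergeometric series `₂F₁(a,b;c;z)`. -/
noncomputable def twoF1 (a b c z : ℂ) : ℂ :=
  ∑' n : ℕ, poch a n * poch b n / (poch c n * (n.factorial : ℂ)) * z ^ n

lemma poch_zero (x : ℂ) : poch x 0 = 1 := by simp [poch]

lemma poch_succ (x : ℂ) (n : ℕ) : poch x (n+1) = poch x n * (x + n) := by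
  simp [poch, ascPochhammer_succ_eval]

lemma poch_add (x : ℂ) (a b : ℕ) : poch x (a + b) = poch x a * poch (x + a) b := by
  induction b with
  | zero => simp [poch_zero]
  | succ b ih => rw [← add_assoc, poch_succ, ih, poch_succ]; push_cast; ring

lemma poch_two_mul (x : ℂ) (n : ℕ) :
    poch x (2 * n) = 4 ^ n * poch (x / 2) n * poch ((x + 1) / 2) n := by
  induction n with
  | zero => simp [poch_zero]
  | succ n ih =>
    have : 2 * (n + 1) = (2 * n) + 1 + 1 := by ring
    rw [this, poch_succ, poch_succ, ih, poch_succ, poch_succ]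
    push_cast
    ring

lemma poch_nat_mul_factorial (m n : ℕ) :
    poch ((m : ℂ) + 1) n * (m.factorial : ℂ) = ((m + n).factorial : ℂ) := by
  induction n with
  | zero => simp [poch_zero]
  | succ n ih =>
    rw [poch_succ, mul_right_comm, ih, ← Nat.add_assoc, Nat.factorial_succ]
    push_cast
    ring

lemma poch_nat_ne_zero (m n : ℕ) : poch ((m : ℂ) + 1) n ≠ 0 := by
  intro hzero
  have := poch_nat_mul_factorial m n
  rw [hzero, zero_mul] at this
  exact (Nat.cast_ne_zero.mpr (Nat.factorial_ne_zero _)) this.symm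

lemma poch_norm_le (x : ℂ) (N : ℕ) (hN : ‖x‖ ≤ N) (k : ℕ) :
    ‖poch x k‖ * (N.factorial : ℝ) ≤ ((k + N).factorial : ℝ) := by
  induction k with
  | zero => simp [poch]
  | succ k ih =>
    rw [poch_succ, norm_mul]
    have h1 : ‖x + (k:ℂ)‖ ≤ (k + N + 1 : ℕ) := by
      refine (norm_add_le _ _).trans ?_
      push_cast
      simp only [Complex.norm_natCast]
      linarith
    calc ‖poch x k‖ * ‖x + (k:ℂ)‖ * N.factorial
        = (‖poch x k‖ * N.factorial) * ‖x + (k:ℂ)‖ := by ring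
      _ ≤ ((k + N).factorial : ℝ) * ((k + N + 1 : ℕ) : ℝ) := by
          apply mul_le_mul ih h1 (norm_nonneg _)
          positivity
      _ = (((k + 1) + N).factorial : ℝ) := by
          rw [show (k+1) + N = (k + N) + 1 by ring, Nat.factorial_succ]
          push_cast; ring

lemma factorial_add_le (k N : ℕ) :
    ((k + N).factorial : ℝ) ≤ k.factorial * (k+1)^N * N.factorial := by
  induction N with
  | zero => simp
  | succ N ih =>
    rw [show k + (N+1) = (k + N) + 1 by ring, Nat.factorial_succ, Nat.factorial_succ]
    push_cast
    calc ((k + N + 1) : ℝ) * (k + N).factorial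
        ≤ ((k+1) * (N+1)) * (k.factorial * (k+1)^N * N.factorial) := by
          apply mul_le_mul _ ih (by positivity) (by positivity)
          push_cast; nlinarith [Nat.cast_nonneg (α := ℝ) k, Nat.cast_nonneg (α := ℝ) N]
      _ = k.factorial * (k+1)^(N+1) * ((N+1) * N.factorial) := by ring

lemma summable_pow_succ_mul_geometric (N : ℕ) {r : ℝ} (h0 : 0 ≤ r) (hr : r < 1) :
    Summable (fun k : ℕ => ((k:ℝ)+1)^N * r^k) := by
  have hr' : ‖r‖ < 1 := by rw [Real.norm_eq_abs, _root_.abs_of_nonneg h0]; exact hr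
  have : ∀ k : ℕ, ((k:ℝ)+1)^N * r^k
      = ∑ j ∈ Finset.range (N+1), ((k:ℝ)^j * (N.choose j)) * r^k := by
    intro k
    rw [← Finset.sum_mul]
    congr 1
    simpa using (add_pow (k:ℝ) 1 N)
  rw [funext this]
  apply summable_sum
  intro j _
  simpa [mul_comm, mul_assoc, mul_left_comm] using
    (summable_pow_mul_geometric_of_norm_lt_one j hr' (R := ℝ)).mul_left ((N.choose j : ℝ))

lemma summable_poch_norm (x : ℂ) {r : ℝ} (h0 : 0 ≤ r) (hr : r < 1) :
    Summable (fun k : ℕ => ‖poch x k‖ / k.factorial * r^k) := by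
  obtain ⟨N, hN⟩ := exists_nat_ge ‖x‖
  refine (summable_pow_succ_mul_geometric N h0 hr).of_nonneg_of_le
    (fun k => by positivity) (fun k => ?_)
  have h1 := (poch_norm_le x N hN k).trans (factorial_add_le k N)
  have hkf : (0:ℝ) < k.factorial := by positivity
  have hNf : (0:ℝ) < N.factorial := by positivity
  have h3 : ‖poch x k‖ ≤ k.factorial * ((k:ℝ)+1)^N :=
    le_of_mul_le_mul_right (by linarith) hNf
  have : ‖poch x k‖ / k.factorial ≤ ((k:ℝ)+1)^N := by
    rw [div_le_iff₀ hkf]; nlinarith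
  exact mul_le_mul_of_nonneg_right this (by positivity)

lemma one_sub_mem_slitPlane {z : ℂ} (hz : ‖z‖ < 1) : (1 - z) ∈ Complex.slitPlane := by
  rw [sub_eq_add_neg]
  exact Complex.mem_slitPlane_of_norm_lt_one (by simpa using hz)

lemma diffon_one_sub_cpow (σ : ℂ) :
    DifferentiableOn ℂ (fun z => (1 - z) ^ σ) (ball (0:ℂ) 1) := by
  intro z hz
  rw [mem_ball_zero_iff] at hz
  exact (((differentiable_const (1:ℂ)).sub differentiable_id).differentiableAt.cpow
    (differentiableAt_const σ) (one_sub_mem_slitPlane hz)).differentiableWithinAt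

lemma iteratedDeriv_one_sub_cpow (σ : ℂ) (n : ℕ) :
    ∀ z ∈ ball (0:ℂ) 1, iteratedDeriv n (fun z => (1 - z) ^ σ) z
      = poch (-σ) n * (1 - z) ^ (σ - n) := by
  induction n with
  | zero => intro z hz; simp [poch]
  | succ n ih =>
    intro z hz
    rw [iteratedDeriv_succ]
    have hev : iteratedDeriv n (fun z => (1 - z) ^ σ) =ᶠ[nhds z]
        (fun w => poch (-σ) n * (1 - w) ^ (σ - n)) := by
      filter_upwards [isOpen_ball.mem_nhds hz] with w hw
      exact ih w hw
    rw [hev.deriv_eq]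
    rw [mem_ball_zero_iff] at hz
    have hd : HasDerivAt (fun w : ℂ => (1 - w) ^ (σ - n))
        ((σ - n) * (1 - z) ^ (σ - n - 1) * (-1)) z := by
      exact (HasDerivAt.cpow_const (((hasDerivAt_id z).const_sub 1))
        (one_sub_mem_slitPlane hz))
    rw [deriv_const_mul _ hd.differentiableAt, hd.deriv, poch_succ]
    push_cast
    rw [show σ - (n + 1 : ℂ) = σ - n - 1 by ring]
    ring

lemma hasSum_one_sub_cpow (σ : ℂ) {x : ℂ} (hx : ‖x‖ < 1) :
    HasSum (fun k : ℕ => poch (-σ) k / k.factorial * x ^ k) ((1 - x) ^ σ) := by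
  have hx' : x ∈ ball (0:ℂ) 1 := mem_ball_zero_iff.mpr hx
  have H := Complex.hasSum_taylorSeries_on_ball (diffon_one_sub_cpow σ) hx'
  convert H using 2 with k
  · rfl
  rw [iteratedDeriv_one_sub_cpow σ k 0 (mem_ball_self one_pos)]
  simp [smul_eq_mul, div_eq_inv_mul]
  ring

lemma integral_exp_int (n : ℤ) :
    ∫ φ in (0:ℝ)..(2*Real.pi), Complex.exp (n * Complex.I * φ)
      = if n = 0 then ((2*Real.pi : ℝ) : ℂ) else 0 := by
  rcases eq_or_ne n 0 with hn | hn
  · simp [hn, two_mul]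
  · rw [if_neg hn]
    have hc : (n : ℂ) * Complex.I ≠ 0 := by
      simp [Complex.I_ne_zero, Int.cast_ne_zero, hn]
    rw [integral_exp_mul_complex hc]
    have h1 : (n:ℂ) * Complex.I * (2*Real.pi:ℝ) = n * (2 * Real.pi * Complex.I) := by
      push_cast; ring
    rw [h1, Complex.exp_int_mul_two_pi_mul_I]
    simp

lemma integral_cos_pow_exp (k m : ℕ) :
    (∫ φ in (0:ℝ)..(2*Real.pi),
        ((Real.cos φ : ℂ))^k * Complex.exp (Complex.I * m * φ))
      = if m ≤ k ∧ 2 ∣ (k - m)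
          then ((2*Real.pi : ℝ):ℂ) * (k.choose ((k-m)/2)) / 2^k else 0 := by
  have expand : ∀ φ : ℝ, ((Real.cos φ : ℂ))^k * Complex.exp (Complex.I * m * φ)
      = ∑ j ∈ Finset.range (k+1),
          ((k.choose j : ℂ) / 2^k) * Complex.exp ((2*(j:ℤ) + m - k : ℤ) * Complex.I * φ) := by
    intro φ
    rw [Complex.ofReal_cos, Complex.cos, div_pow, add_pow]
    rw [div_mul_eq_mul_div, Finset.sum_mul, Finset.sum_div]
    refine Finset.sum_congr rfl fun j hj => ?_
    rw [Finset.mem_range, Nat.lt_succ_iff] at hj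
    rw [← Complex.exp_nat_mul, ← Complex.exp_nat_mul]
    have hkey : Complex.exp ((j:ℂ) * ((φ:ℂ) * Complex.I)) *
        Complex.exp (((k-j : ℕ):ℂ) * (-(φ:ℂ) * Complex.I)) *
        Complex.exp (Complex.I * (m:ℂ) * (φ:ℂ))
        = Complex.exp ((2*(j:ℤ) + m - k : ℤ) * Complex.I * φ) := by
      rw [← Complex.exp_add, ← Complex.exp_add]
      congr 1
      push_cast [hj]
      ring
    rw [← hkey]
    ring
  simp_rw [expand]
  rw [intervalIntegral.integral_finset_sum]
  swap
  · intro j _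
    apply Continuous.intervalIntegrable
    exact continuous_const.mul ((Complex.continuous_exp.comp (by fun_prop)))
  have key : ∀ j ∈ Finset.range (k+1),
      (∫ φ in (0:ℝ)..(2*Real.pi),
        ((k.choose j : ℂ) / 2^k) * Complex.exp ((2*(j:ℤ) + m - k : ℤ) * Complex.I * φ))
      = ((k.choose j : ℂ) / 2^k) * (if (2*(j:ℤ) + m - k : ℤ) = 0 then ((2*Real.pi:ℝ):ℂ) else 0) := by
    intro j _
    rw [intervalIntegral.integral_const_mul, integral_exp_int]
  rw [Finset.sum_congr rfl key]
  by_cases hc : m ≤ k ∧ 2 ∣ (k - m)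
  · rw [if_pos hc]
    obtain ⟨h1, h2⟩ := hc
    set j0 := (k - m)/2 with hj0
    have hj0k : 2 * j0 + m = k := by omega
    rw [Finset.sum_eq_single j0]
    · rw [if_pos (by push_cast; omega)]
      ring
    · intro j _ hne
      rw [if_neg (by push_cast; omega), mul_zero]
    · intro habs
      exact absurd (Finset.mem_range.mpr (by omega)) habs
  · rw [if_neg hc]
    apply Finset.sum_eq_zero
    intro j hj
    rw [Finset.mem_range, Nat.lt_succ_iff] at hj
    rw [if_neg (by push_cast; omega), mul_zero]

lemma term_identity (σ t : ℂ) (m n : ℕ) :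
    poch (-σ) (m + 2*n) / ((m + 2*n).factorial : ℂ) * t^(m + 2*n) *
        (((m + 2*n).choose n : ℂ)) / 2^(m + 2*n)
      = poch (-σ) m / (2^m * (m.factorial : ℂ)) * t^m *
        (poch (((m:ℂ) - σ)/2) n * poch (((m:ℂ) - σ + 1)/2) n /
          (poch ((m:ℂ)+1) n * (n.factorial : ℂ)) * ((t^2)^n)) := by
  have e1 : poch (-σ) (m + 2*n)
      = poch (-σ) m * (4^n * poch (((m:ℂ)-σ)/2) n * poch (((m:ℂ)-σ+1)/2) n) := by
    rw [poch_add, show -σ + (m:ℂ) = (m:ℂ) - σ from by ring, poch_two_mul]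
  have e2 : ((m + 2*n).factorial : ℂ)
      = ((m + 2*n).choose n : ℂ) * (n.factorial : ℂ) * ((m+n).factorial : ℂ) := by
    have := Nat.choose_mul_factorial_mul_factorial (show n ≤ m + 2*n by omega)
    rw [show m + 2*n - n = m + n by omega] at this
    exact_mod_cast this.symm
  have e3 : ((m+n).factorial : ℂ) = poch ((m:ℂ)+1) n * (m.factorial : ℂ) :=
    (poch_nat_mul_factorial m n).symm
  have hch : ((m + 2*n).choose n : ℂ) ≠ 0 :=
    Nat.cast_ne_zero.mpr (Nat.choose_pos (show n ≤ m + 2*n by omega)).ne'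
  have hnf : ((n.factorial : ℂ)) ≠ 0 := Nat.cast_ne_zero.mpr (Nat.factorial_ne_zero n)
  have hmf : ((m.factorial : ℂ)) ≠ 0 := Nat.cast_ne_zero.mpr (Nat.factorial_ne_zero m)
  have hpo := poch_nat_ne_zero m n
  rw [e1, e2, e3, pow_add, pow_mul]
  field_simp
  rw [show (4:ℂ)^n = 2^(n*2) by rw [show (4:ℂ) = 2^2 by norm_num, ← pow_mul, mul_comm]]
  ring

lemma main_aux (σ : ℂ) (t : ℝ) (ht : |t| < 1) (c : ℝ) (hc : 0 < c) (m : ℕ) :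
    (1 / (2 * (Real.pi : ℂ))) *
        ∫ φ in (0:ℝ)..(2 * Real.pi),
          ((c - c * t * Real.cos φ : ℝ) : ℂ) ^ σ * Complex.exp (Complex.I * m * φ) =
      poch (-σ) m / (2 ^ m * (m.factorial : ℂ)) * ((c : ℝ) : ℂ) ^ σ * ((t : ℝ) : ℂ) ^ m *
        twoF1 (((m : ℂ) - σ) / 2) (((m : ℂ) - σ + 1) / 2) ((m : ℂ) + 1) (((t)^2 : ℝ) : ℂ) := by
  have h2pi : (0:ℝ) ≤ 2 * Real.pi := by positivity
  set μ : Measure ℝ := volume.restrict (Set.Ioc (0:ℝ) (2*Real.pi)) with hμ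
  set F : ℕ → ℝ → ℂ := fun k φ =>
    (c:ℂ)^σ * (poch (-σ) k / k.factorial * ((t * Real.cos φ : ℝ):ℂ)^k) *
      Complex.exp (Complex.I * m * φ) with hF
  -- pointwise expansion
  have hsum1 : ∀ φ : ℝ, HasSum (fun k => F k φ)
      (((c - c * t * Real.cos φ : ℝ) : ℂ) ^ σ * Complex.exp (Complex.I * m * φ)) := by
    intro φ
    have hx : ‖((t * Real.cos φ : ℝ):ℂ)‖ < 1 := by
      rw [Complex.norm_real, Real.norm_eq_abs, abs_mul]
      calc |t| * |Real.cos φ| ≤ |t| * 1 :=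
            mul_le_mul_of_nonneg_left (Real.abs_cos_le_one φ) (abs_nonneg t)
        _ < 1 := by rwa [mul_one]
    have hbase : ((c - c * t * Real.cos φ : ℝ) : ℂ) ^ σ
        = (c:ℂ)^σ * ((1 : ℂ) - ((t * Real.cos φ : ℝ):ℂ))^σ := by
      have h1 : (c - c * t * Real.cos φ : ℝ) = c * (1 - t * Real.cos φ) := by ring
      have h2 : (0:ℝ) ≤ 1 - t * Real.cos φ := by
        have : |t * Real.cos φ| < 1 := by
          rwa [Complex.norm_real, Real.norm_eq_abs] at hx
        have := abs_lt.mp this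
        linarith [this.1, this.2]
      rw [h1, Complex.ofReal_mul, mul_cpow_ofReal_nonneg hc.le h2]
      push_cast
      ring_nf
    rw [hbase]
    have H := ((hasSum_one_sub_cpow σ hx).mul_left ((c:ℂ)^σ)).mul_right
      (Complex.exp (Complex.I * m * φ))
    exact H
  -- integrability of each term
  have hFcont : ∀ k, Continuous (F k) := by
    intro k
    apply Continuous.mul
    · apply Continuous.mul continuous_const
      apply Continuous.mul continuous_const
      exact (Complex.continuous_ofReal.comp (continuous_const.mul Real.continuous_cos)).pow k
    · exact Complex.continuous_exp.comp (by fun_prop)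
  have hFint : ∀ k, Integrable (F k) μ := by
    intro k
    exact ((hFcont k).integrableOn_Ioc).integrable
  -- norm bound
  have hFnorm : ∀ k, ∀ φ : ℝ, ‖F k φ‖ ≤ ‖(c:ℂ)^σ‖ * (‖poch (-σ) k‖ / k.factorial * |t|^k) := by
    intro k φ
    rw [hF]
    simp only [norm_mul, norm_div, Complex.norm_real, Real.norm_eq_abs, norm_pow,
      Complex.norm_natCast]
    have he : ‖Complex.exp (Complex.I * m * φ)‖ = 1 := by
      rw [show Complex.I * (m:ℂ) * (φ:ℂ) = (((m:ℝ)*φ : ℝ):ℂ) * Complex.I by push_cast; ring,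
        Complex.norm_exp_ofReal_mul_I]
    rw [he, mul_one]
    have h1 : |t| * |Real.cos φ| ≤ |t| := by
      calc |t| * |Real.cos φ| ≤ |t| * 1 :=
            mul_le_mul_of_nonneg_left (Real.abs_cos_le_one φ) (abs_nonneg t)
        _ = |t| := mul_one _
    gcongr
  -- summability of integrals of norms
  have hμuniv : (μ Set.univ).toReal = 2 * Real.pi := by
    rw [hμ, Measure.restrict_apply MeasurableSet.univ, Set.univ_inter, Real.volume_Ioc,
      sub_zero, ENNReal.toReal_ofReal h2pi]
  have hFsum : Summable fun k => ∫ φ, ‖F k φ‖ ∂μ := by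
    apply Summable.of_nonneg_of_le (fun k => integral_nonneg (fun φ => norm_nonneg _))
      (g := fun k => ∫ φ, ‖F k φ‖ ∂μ)
      (f := fun k => (2 * Real.pi * ‖(c:ℂ)^σ‖) * (‖poch (-σ) k‖ / k.factorial * |t|^k))
    · intro k
      calc ∫ φ, ‖F k φ‖ ∂μ
          ≤ ∫ _, ‖(c:ℂ)^σ‖ * (‖poch (-σ) k‖ / k.factorial * |t|^k) ∂μ := by
            apply integral_mono ((hFint k).norm) (integrable_const _)
            intro φ
            exact hFnorm k φ
        _ = (2 * Real.pi * ‖(c:ℂ)^σ‖) * (‖poch (-σ) k‖ / k.factorial * |t|^k) := by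
            rw [MeasureTheory.integral_const, Measure.real, hμuniv, smul_eq_mul]
            ring
    · exact (summable_poch_norm (-σ) (abs_nonneg t) ht).mul_left _
  -- swap integral and sum
  have hswap : (∫ φ in (0:ℝ)..(2 * Real.pi),
        ((c - c * t * Real.cos φ : ℝ) : ℂ) ^ σ * Complex.exp (Complex.I * m * φ))
      = ∑' k, ∫ φ, F k φ ∂μ := by
    rw [intervalIntegral.integral_of_le h2pi]
    rw [show (fun φ => ((c - c * t * Real.cos φ : ℝ) : ℂ) ^ σ *
        Complex.exp (Complex.I * m * φ)) = fun φ => ∑' k, F k φ from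
      funext fun φ => ((hsum1 φ).tsum_eq).symm]
    exact (integral_tsum_of_summable_integral_norm hFint hFsum).symm
  -- evaluate each integral
  have heval : ∀ k, (∫ φ, F k φ ∂μ)
      = (c:ℂ)^σ * (poch (-σ) k / k.factorial * (t:ℂ)^k) *
          (if m ≤ k ∧ 2 ∣ (k - m)
            then ((2*Real.pi : ℝ):ℂ) * (k.choose ((k-m)/2)) / 2^k else 0) := by
    intro k
    rw [← intervalIntegral.integral_of_le h2pi, ← integral_cos_pow_exp k m,
      ← intervalIntegral.integral_const_mul]
    apply intervalIntegral.integral_congr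
    intro φ _
    rw [hF]
    push_cast
    ring
  -- normalize constants
  set f' : ℕ → ℂ := fun k =>
    (c:ℂ)^σ * (poch (-σ) k / k.factorial * (t:ℂ)^k) *
      (if m ≤ k ∧ 2 ∣ (k - m) then ((k.choose ((k-m)/2)) : ℂ) / 2^k else 0) with hf'
  have hπ : (Real.pi : ℂ) ≠ 0 := by exact_mod_cast Real.pi_ne_zero
  have hconst : ∀ k, (1 / (2 * (Real.pi:ℂ))) * ((c:ℂ)^σ *
      (poch (-σ) k / k.factorial * (t:ℂ)^k) *
      (if m ≤ k ∧ 2 ∣ (k - m)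
        then ((2*Real.pi : ℝ):ℂ) * (k.choose ((k-m)/2)) / 2^k else 0)) = f' k := by
    intro k
    rw [hf']
    by_cases hcond : m ≤ k ∧ 2 ∣ (k - m)
    · simp only [if_pos hcond]
      have h1 : (1/(2*(Real.pi:ℂ))) * (2*(Real.pi:ℂ)) = 1 := by field_simp
      calc (1 / (2 * (Real.pi:ℂ))) * ((c:ℂ)^σ * (poch (-σ) k / k.factorial * (t:ℂ)^k) *
            (((2*Real.pi : ℝ):ℂ) * (k.choose ((k-m)/2)) / 2^k))
          = ((1/(2*(Real.pi:ℂ))) * (2*(Real.pi:ℂ))) *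
              ((c:ℂ)^σ * (poch (-σ) k / k.factorial * (t:ℂ)^k) *
                (((k.choose ((k-m)/2)):ℂ) / 2^k)) := by push_cast; ring
        _ = (c:ℂ)^σ * (poch (-σ) k / k.factorial * (t:ℂ)^k) *
              (((k.choose ((k-m)/2)):ℂ) / 2^k) := by rw [h1, one_mul]
    · simp only [if_neg hcond, mul_zero]
  -- reindex
  set P : ℂ := poch (-σ) m / (2^m * (m.factorial : ℂ)) * (c:ℂ)^σ * (t:ℂ)^m with hP
  set T : ℕ → ℂ := fun n =>
    poch (((m:ℂ) - σ)/2) n * poch (((m:ℂ) - σ + 1)/2) n /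
      (poch ((m:ℂ)+1) n * (n.factorial : ℂ)) * (((t^2 : ℝ):ℂ))^n with hT
  have claim : ∀ n, f' (m + 2*n) = P * T n := by
    intro n
    have hc1 : m ≤ m + 2*n := by omega
    have hc2 : 2 ∣ (m + 2*n - m) := by omega
    have hc3 : (m + 2*n - m)/2 = n := by omega
    rw [hf', hP, hT]
    simp only [if_pos (And.intro hc1 hc2), hc3]
    have := term_identity σ ((t:ℝ):ℂ) m n
    have hcast : (((t^2 : ℝ)):ℂ) = ((t:ℝ):ℂ)^2 := by push_cast; ring
    rw [hcast]
    calc (c:ℂ)^σ * (poch (-σ) (m+2*n) / (m+2*n).factorial * ((t:ℝ):ℂ)^(m+2*n)) *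
          (((m+2*n).choose n : ℂ) / 2^(m+2*n))
        = (c:ℂ)^σ * (poch (-σ) (m + 2*n) / ((m + 2*n).factorial : ℂ) * ((t:ℝ):ℂ)^(m + 2*n) *
            (((m + 2*n).choose n : ℂ)) / 2^(m + 2*n)) := by ring
      _ = (c:ℂ)^σ * (poch (-σ) m / (2^m * (m.factorial : ℂ)) * ((t:ℝ):ℂ)^m *
            (poch (((m:ℂ) - σ)/2) n * poch (((m:ℂ) - σ + 1)/2) n /
              (poch ((m:ℂ)+1) n * (n.factorial : ℂ)) * ((((t:ℝ):ℂ)^2)^n))) := by rw [this]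
      _ = poch (-σ) m / (2 ^ m * (m.factorial : ℂ)) * (c:ℂ)^σ * ((t:ℝ):ℂ)^m *
            (poch (((m:ℂ) - σ)/2) n * poch (((m:ℂ) - σ + 1)/2) n /
              (poch ((m:ℂ)+1) n * (n.factorial : ℂ)) * ((((t:ℝ):ℂ)^2)^n)) := by ring
  have hreindex : ∑' k, f' k = ∑' n, P * T n := by
    apply tsum_eq_tsum_of_ne_zero_bij (i := fun x => m + 2 * x.1)
    · intro x y hxy
      simp only at hxy
      exact Subtype.ext (by omega)
    · intro k hk
      rw [Function.mem_support] at hk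
      have hcond : m ≤ k ∧ 2 ∣ (k - m) := by
        by_contra hcon
        apply hk
        rw [hf']
        simp only [if_neg hcon, mul_zero]
      obtain ⟨h1, h2⟩ := hcond
      have hkeq : k = m + 2 * ((k - m)/2) := by omega
      refine ⟨⟨(k-m)/2, ?_⟩, hkeq.symm⟩
      rw [Function.mem_support, ← claim, ← hkeq]
      exact hk
    · intro x
      exact claim x.1
  rw [hswap, ← tsum_mul_left]
  simp_rw [heval, hconst]
  rw [hreindex, tsum_mul_left, hP]
  rw [show twoF1 (((m : ℂ) - σ) / 2) (((m : ℂ) - σ + 1) / 2) ((m : ℂ) + 1) (((t)^2 : ℝ) : ℂ)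
      = ∑' n, T n from rfl]

theorem stmt6 (σ : ℂ) (α : ℝ) (h : |Real.tanh α| < 1) (m : ℕ) :
    (1 / (2 * (Real.pi : ℂ))) *
        ∫ φ in (0:ℝ)..(2 * Real.pi),
          ((Real.cosh α - Real.sinh α * Real.cos φ : ℝ) : ℂ) ^ σ *
            Complex.exp (Complex.I * m * φ) =
      poch (-σ) m / (2 ^ m * (m.factorial : ℂ)) *
        ((Real.cosh α : ℝ) : ℂ) ^ σ * ((Real.tanh α : ℝ) : ℂ) ^ m *
        twoF1 (((m : ℂ) - σ) / 2) (((m : ℂ) - σ + 1) / 2) ((m : ℂ) + 1)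
          (((Real.tanh α)^2 : ℝ) : ℂ) := by
  have hs : Real.sinh α = Real.cosh α * Real.tanh α := by
    rw [Real.tanh_eq_sinh_div_cosh]
    field_simp [(Real.cosh_pos α).ne']
  simp_rw [hs]
  exact main_aux σ (Real.tanh α) h (Real.cosh α) (Real.cosh_pos α) m
end
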